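/- Let $0\le\alpha<p$, $0\le\mu<1$, $0\le\delta\le1$, $-1\le B<A\le1$, $p\in\mathbb{N}$, $\varphi>-p$. Suppose $g(z)=z^p-\sum_{k=p+1}^\infty b_k z^k$ with $b_k\ge0$ satisfies $\sum_{k=p+1}^\infty k b_k \le \frac{(p+1)(A-B)(p-\alpha)}{[(1-B)+(A-B)(p-\alpha)](1-\mu)(p+\delta)}$, and define $a_k = \frac{(p+\varphi)(p+\varphi+1)}{(k+\varphi)(k+\varphi+1)} b_k$ for $k\ge p+1$. Then $\sum_{k=p+1}^\infty k|b_k - a_k| \le \frac{(p+1)(A-B)(p-\alpha)}{[(1-B)+(A-B)(p-\alpha)](1-\mu)(p+\delta)} \cdot \frac{2(p+\varphi+1)}{p+\varphi+2}$. -/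
import Mathlib


theorem stmt3 (p : ℕ) (hp : 1 ≤ p) (α μ δ A B φ : ℝ)
    (hα0 : 0 ≤ α) (hαp : α < p) (hμ0 : 0 ≤ μ) (hμ1 : μ < 1)
    (hδ0 : 0 ≤ δ) (hδ1 : δ ≤ 1) (hB : -1 ≤ B) (hBA : B < A) (hA : A ≤ 1)
    (hφ : -(p : ℝ) < φ)
    (b : ℕ → ℝ) (hb0 : ∀ k, 0 ≤ b k) (hbz : ∀ k, k < p + 1 → b k = 0)
    (hbsum : Summable (fun k : ℕ => (k : ℝ) * b k))
    (hble : (∑' k : ℕ, (k : ℝ) * b k) ≤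
      ((p : ℝ) + 1) * (A - B) * ((p : ℝ) - α) /
        (((1 - B) + (A - B) * ((p : ℝ) - α)) * (1 - μ) * ((p : ℝ) + δ)))
    (a : ℕ → ℝ)
    (ha : ∀ k, p + 1 ≤ k →
      a k = ((p : ℝ) + φ) * ((p : ℝ) + φ + 1) / (((k : ℝ) + φ) * ((k : ℝ) + φ + 1)) * b k)
    (haz : ∀ k, k < p + 1 → a k = 0)
    (hdsum : Summable (fun k : ℕ => (k : ℝ) * |b k - a k|)) :
    (∑' k : ℕ, (k : ℝ) * |b k - a k|) ≤
      ((p : ℝ) + 1) * (A - B) * ((p : ℝ) - α) /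
        (((1 - B) + (A - B) * ((p : ℝ) - α)) * (1 - μ) * ((p : ℝ) + δ)) *
        (2 * ((p : ℝ) + φ + 1) / ((p : ℝ) + φ + 2)) := by
  have hpφ : 0 < (p : ℝ) + φ := by linarith
  -- pointwise: k*|b k - a k| ≤ k * b k
  have key : ∀ k : ℕ, (k : ℝ) * |b k - a k| ≤ (k : ℝ) * b k := by
    intro k
    rcases lt_or_ge k (p + 1) with h | h
    · simp [hbz k h, haz k h]
    · have hk : (p : ℝ) + 1 ≤ (k : ℝ) := by exact_mod_cast h
      have hkφ : 0 < (k : ℝ) + φ := by linarith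
      have hkφ1 : 0 < (k : ℝ) + φ + 1 := by linarith
      have hden : 0 < ((k : ℝ) + φ) * ((k : ℝ) + φ + 1) := mul_pos hkφ hkφ1
      have hc0 : 0 ≤ ((p : ℝ) + φ) * ((p : ℝ) + φ + 1) / (((k : ℝ) + φ) * ((k : ℝ) + φ + 1)) := by
        positivity
      have hc1 : ((p : ℝ) + φ) * ((p : ℝ) + φ + 1) / (((k : ℝ) + φ) * ((k : ℝ) + φ + 1)) ≤ 1 := by
        rw [div_le_one hden]
        nlinarith
      have ha' := ha k h
      have habs : |b k - a k| ≤ b k := by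
        rw [ha', abs_le]
        constructor
        · nlinarith [hb0 k]
        · nlinarith [hb0 k, mul_le_of_le_one_left (hb0 k) hc1]
      exact mul_le_mul_of_nonneg_left habs (Nat.cast_nonneg k)
  have h1 : (∑' k : ℕ, (k : ℝ) * |b k - a k|) ≤ ∑' k : ℕ, (k : ℝ) * b k :=
    Summable.tsum_le_tsum key hdsum hbsum
  have h0 : 0 ≤ ∑' k : ℕ, (k : ℝ) * b k :=
    tsum_nonneg fun k => mul_nonneg (Nat.cast_nonneg k) (hb0 k)
  set C := ((p : ℝ) + 1) * (A - B) * ((p : ℝ) - α) /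
        (((1 - B) + (A - B) * ((p : ℝ) - α)) * (1 - μ) * ((p : ℝ) + δ))
  have hC0 : 0 ≤ C := le_trans h0 hble
  have hM : 1 ≤ 2 * ((p : ℝ) + φ + 1) / ((p : ℝ) + φ + 2) := by
    rw [le_div_iff₀ (by linarith)]
    linarith
  calc (∑' k : ℕ, (k : ℝ) * |b k - a k|) ≤ C := le_trans h1 hble
    _ = C * 1 := by ring
    _ ≤ C * (2 * ((p : ℝ) + φ + 1) / ((p : ℝ) + φ + 2)) :=
        mul_le_mul_of_nonneg_left hM hC0
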